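/- Let (X,d,m) be a locally compact metric measure space satisfying the ball condition, and let G denote either ISO(X) or ISO_m(X). Suppose that for every x ∈ X, every s > 0, and every 0 < ξ' < 1 there exists a subgroup Λ of G with Λ ≠ {id} such that every g ∈ Λ satisfies m((X \ Fix(g)) ∩ B_s(x)) ≤ ξ'·m(B_s(x)), where B_s(x) is the open ball. Then G has the small subgroup property. -/

import Mathlib

open Metric MeasureTheory ENNReal Set

noncomputable section

/-- Compact-open topology on the isometry group. -/
instance isoCompactOpen (X : Type*) [MetricSpace X] : TopologicalSpace (X ≃ᵢ X) :=
  TopologicalSpace.induced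
    (fun f : X ≃ᵢ X => (⟨f, f.continuous⟩ : C(X, X))) ContinuousMap.compactOpen

/-- The subgroup of measure-preserving isometries. -/
def isoMeasure {X : Type*} [MetricSpace X] [MeasurableSpace X] [BorelSpace X]
    (m : Measure X) : Subgroup (X ≃ᵢ X) where
  carrier := {f | Measure.map f m = m}
  one_mem' := by
    show Measure.map ⇑(1 : X ≃ᵢ X) m = m
    rw [IsometryEquiv.coe_one, Measure.map_id]
  mul_mem' := by
    intro f g hf hg
    show Measure.map ⇑(f * g) m = m
    rw [IsometryEquiv.coe_mul,
      ← Measure.map_map f.continuous.measurable g.continuous.measurable]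
    rw [show Measure.map (⇑g) m = m from hg, show Measure.map (⇑f) m = m from hf]
  inv_mem' := by
    intro f hf
    show Measure.map ⇑f⁻¹ m = m
    conv_lhs => rw [← show Measure.map (⇑f) m = m from hf]
    rw [Measure.map_map f⁻¹.continuous.measurable f.continuous.measurable]
    have h : ⇑f⁻¹ ∘ ⇑f = id := by
      funext y; exact f.symm_apply_apply y
    rw [h, Measure.map_id]

/-- The ball condition: every closed ball is the closure of the open ball. -/
def BallCondition (X : Type*) [MetricSpace X] : Prop :=
  ∀ (x : X) (r : ℝ), 0 < r → closedBall x r = closure (ball x r)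

/-- `GHDistLt A B c` : the Gromov–Hausdorff distance between `A` and `B` is `< c`,
expressed through isometric embeddings into `ℓ^∞(ℕ)`. -/
def GHDistLt {X : Type*} [MetricSpace X] {Y : Type*} [MetricSpace Y]
    (A : Set X) (B : Set Y) (c : ℝ) : Prop :=
  ∃ (f : A → lp (fun _ : ℕ => ℝ) ∞) (g : B → lp (fun _ : ℕ => ℝ) ∞),
    Isometry f ∧ Isometry g ∧
      EMetric.hausdorffEdist (Set.range f) (Set.range g) < ENNReal.ofReal c

/-- `X` has `m`-a.e. Euclidean tangent cones (quantitative form). -/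
def HasAEEuclideanTangents {X : Type*} [MetricSpace X] [MeasurableSpace X]
    (m : Measure X) : Prop :=
  ∃ K : ℕ, ∀ ε : ℝ, 0 < ε →
    m ({x : X | ∃ δ > 0, ∃ k ≤ K, ∀ r : ℝ, 0 < r → r < δ →
        GHDistLt (closedBall x r) (closedBall (0 : EuclideanSpace ℝ (Fin k)) r) (ε * r)}ᶜ) = 0

/-- Condition (a) for a group `G` of isometries. -/
def CondA {X : Type*} [MetricSpace X] [MeasurableSpace X] (m : Measure X)
    (G : Subgroup (X ≃ᵢ X)) : Prop :=
  ∃ (x : X) (s : ℝ) (FIX : ℝ≥0∞), 0 < s ∧ 0 < FIX ∧ FIX < m (ball x s) ∧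
    ∀ g ∈ G, g ≠ 1 → m ({y | g y = y} ∩ ball x s) < FIX

/-- `G` is a Lie group: it admits a `C^∞`-manifold structure modeled on some `ℝⁿ`,
compatible with its topology, making multiplication and inversion smooth. -/
def IsLieGroup (G : Type*) [Group G] [TopologicalSpace G] : Prop :=
  ∃ (n : ℕ) (cs : ChartedSpace (EuclideanSpace ℝ (Fin n)) G),
    @LieGroup ℝ _ (EuclideanSpace ℝ (Fin n)) _ (EuclideanSpace ℝ (Fin n)) _ _
      (modelWithCornersSelf ℝ (EuclideanSpace ℝ (Fin n))) ((⊤ : ℕ∞) : WithTop ℕ∞) G _ _ cs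

end

/-- `G` has the small subgroup property: every neighborhood of the identity contains
a nontrivial subgroup. -/
def HasSmallSubgroups (G : Type*) [Group G] [TopologicalSpace G] : Prop :=
  ∀ U ∈ nhds (1 : G), ∃ H : Subgroup G, (H : Set G) ⊆ U ∧ H ≠ ⊥

/-- Let `(X,d,m)` be a locally compact metric measure space satisfying
the ball condition, and `G` either `ISO(X)` or `ISO_m(X)`. If for every `x`, `s > 0` and
`0 < ξ' < 1` there is a nontrivial subgroup `Λ ≤ G` all of whose elements `g` satisfy
`m((X \ Fix g) ∩ B_s(x)) ≤ ξ' · m(B_s(x))`, then `G` has the small subgroup property. -/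
theorem big_fixed_point_sets_implies_small_subgroups
    {X : Type*} [MetricSpace X] [TopologicalSpace.SeparableSpace X] [CompleteSpace X]
    [LocallyCompactSpace X] [MeasurableSpace X] [BorelSpace X]
    (m : Measure X) (hm0 : m ≠ 0)
    (hfin : ∀ s : Set X, Bornology.IsBounded s → m s ≠ ∞)
    (hsupp : ∀ U : Set X, IsOpen U → U.Nonempty → 0 < m U)
    (hball : BallCondition X)
    (G : Subgroup (X ≃ᵢ X)) (hG : G = ⊤ ∨ G = isoMeasure m)
    (hfix : ∀ (x : X) (s ξ' : ℝ), 0 < s → 0 < ξ' → ξ' < 1 →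
      ∃ Λ : Subgroup (X ≃ᵢ X), Λ ≤ G ∧ Λ ≠ ⊥ ∧
        ∀ g ∈ Λ, m ({y | g y = y}ᶜ ∩ ball x s) ≤ ENNReal.ofReal ξ' * m (ball x s)) :
    HasSmallSubgroups G := by
  classical
  intro U hU
  -- `X` is nonempty since `m ≠ 0`
  have hne : Nonempty X := by
    by_contra h
    rw [not_nonempty_iff] at h
    exact hm0 (by ext s hs; simp [Set.eq_empty_of_isEmpty s])
  obtain ⟨x₀⟩ := hne
  set F : (X ≃ᵢ X) → C(X, X) := fun f => (⟨f, f.continuous⟩ : C(X, X)) with hF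
  -- unfold the neighborhood through the two induced topologies
  have h1 : nhds (1 : G) = Filter.comap (Subtype.val : G → X ≃ᵢ X) (nhds (1 : X ≃ᵢ X)) :=
    nhds_induced _ _
  have h2 : nhds (1 : X ≃ᵢ X) = Filter.comap F (nhds (F 1)) := nhds_induced F 1
  rw [h1, h2, Filter.comap_comap] at hU
  obtain ⟨W, hW, hWU⟩ := Filter.mem_comap.mp hU
  have hb : (nhds (F 1)).HasBasis (fun p : Set X × ℝ => IsCompact p.1 ∧ 0 < p.2)
      (fun p => UniformSpace.ball (F 1)
        { fg : C(X, X) × C(X, X) | ∀ x ∈ p.1, dist (fg.1 x) (fg.2 x) < p.2 }) :=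
    nhds_basis_uniformity'
      (Filter.HasBasis.compactConvergenceUniformity (Metric.uniformity_basis_dist (α := X)))
  obtain ⟨⟨K, ε⟩, ⟨hK, hε⟩, hsub⟩ := hb.mem_iff.mp hW
  -- geometry
  set r : ℝ := ε / 3 with hrdef
  have hr0 : 0 < r := by positivity
  obtain ⟨R, hR0, hKR⟩ := hK.isBounded.subset_closedBall_lt 0 x₀
  set s : ℝ := R + r + 1 with hsdef
  have hs0 : 0 < s := by positivity
  set M := m (ball x₀ s) with hMdef
  have hM0 : 0 < M := hsupp _ isOpen_ball ⟨x₀, mem_ball_self hs0⟩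
  have hMtop : M ≠ ∞ := hfin _ isBounded_ball
  obtain ⟨t, htK, htfin, htcov⟩ := hK.elim_finite_subcover_image
    (fun y (_ : y ∈ K) => isOpen_ball (x := y) (ε := r / 2))
    (fun y hy => Set.mem_biUnion hy (mem_ball_self (by positivity)))
  have hxi : ∃ ξ' : ℝ, 0 < ξ' ∧ ξ' < 1 ∧
      ∀ y ∈ t, ENNReal.ofReal ξ' * M < m (ball y (r / 2)) := by
    by_cases hT : htfin.toFinset.Nonempty
    · set a : X → ℝ := fun y => (m (ball y (r / 2)) / M).toReal with ha
      set b : ℝ := htfin.toFinset.inf' hT a with hbdef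
      have hbd : ∀ y ∈ t, 0 < m (ball y (r / 2)) ∧ m (ball y (r / 2)) ≠ ∞ := fun y hy =>
        ⟨hsupp _ isOpen_ball ⟨y, mem_ball_self (by positivity)⟩, hfin _ isBounded_ball⟩
      have hb0 : 0 < b := by
        rw [hbdef, Finset.lt_inf'_iff]
        intro y hy
        have hy' : y ∈ t := htfin.mem_toFinset.mp hy
        exact ENNReal.toReal_pos
          (ENNReal.div_ne_zero.mpr ⟨(hbd y hy').1.ne', hMtop⟩)
          (ENNReal.div_lt_top (hbd y hy').2 hM0.ne').ne
      refine ⟨min (1 / 2) (b / 2), by positivity,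
        lt_of_le_of_lt (min_le_left _ _) (by norm_num), ?_⟩
      intro y hy
      have hd0 : m (ball y (r / 2)) / M ≠ 0 :=
        ENNReal.div_ne_zero.mpr ⟨(hbd y hy).1.ne', hMtop⟩
      have hdt : m (ball y (r / 2)) / M ≠ ∞ :=
        (ENNReal.div_lt_top (hbd y hy).2 hM0.ne').ne
      have hba : b ≤ a y := Finset.inf'_le a (htfin.mem_toFinset.mpr hy)
      have hle : ENNReal.ofReal (min (1 / 2) (b / 2)) ≤ (m (ball y (r / 2)) / M) / 2 := by
        calc ENNReal.ofReal (min (1 / 2) (b / 2))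
            ≤ ENNReal.ofReal (a y / 2) :=
              ENNReal.ofReal_le_ofReal (le_trans (min_le_right _ _) (by linarith))
          _ = ENNReal.ofReal (a y) / ENNReal.ofReal 2 := ENNReal.ofReal_div_of_pos (by norm_num)
          _ = (m (ball y (r / 2)) / M) / 2 := by
              rw [ha]; rw [ENNReal.ofReal_toReal hdt]; norm_num
      calc ENNReal.ofReal (min (1 / 2) (b / 2)) * M
          ≤ ((m (ball y (r / 2)) / M) / 2) * M := by
            exact mul_le_mul_left hle M
        _ < (m (ball y (r / 2)) / M) * M := by
            rw [mul_comm _ M, mul_comm _ M]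
            exact ENNReal.mul_lt_mul_right hM0.ne' hMtop (ENNReal.half_lt_self hd0 hdt)
        _ = m (ball y (r / 2)) := ENNReal.div_mul_cancel hM0.ne' hMtop
    · refine ⟨1 / 2, by norm_num, by norm_num, ?_⟩
      intro y hy
      exact absurd (htfin.mem_toFinset.mpr hy) (by
        rw [Finset.not_nonempty_iff_eq_empty] at hT
        simp [hT])
  obtain ⟨ξ', hξ0, hξ1, hξ⟩ := hxi
  obtain ⟨Λ, hΛG, hΛbot, hΛ⟩ := hfix x₀ s ξ' hs0 hξ0 hξ1
  -- every element of Λ moves points of K by less than ε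
  have key : ∀ g ∈ Λ, ∀ y ∈ K, dist y (g y) < ε := by
    intro g hg y hy
    by_contra hlt
    push_neg at hlt
    obtain ⟨i, hit, hyi⟩ : ∃ i ∈ t, y ∈ ball i (r / 2) := by
      have := htcov hy; simpa using this
    have hsub1 : ball i (r / 2) ⊆ {z | g z = z}ᶜ := by
      intro z hz
      simp only [Set.mem_compl_iff, Set.mem_setOf_eq]
      intro hgz
      have hzi : dist z i < r / 2 := mem_ball.mp hz
      have hyi' : dist y i < r / 2 := mem_ball.mp hyi
      have hzy : dist z y < r := by
        calc dist z y ≤ dist z i + dist i y := dist_triangle _ _ _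
          _ = dist z i + dist y i := by rw [dist_comm i y]
          _ < r := by linarith
      have hzgy : dist z (g y) < r := by
        calc dist z (g y) = dist (g z) (g y) := by rw [hgz]
          _ = dist z y := g.dist_eq z y
          _ < r := hzy
      have : dist y (g y) ≤ dist y z + dist z (g y) := dist_triangle _ _ _
      rw [dist_comm y z] at this
      have hrε : 2 * r < ε := by rw [hrdef]; linarith
      linarith
    have hsub2 : ball i (r / 2) ⊆ ball x₀ s := by
      intro z hz
      have hix : dist i x₀ ≤ R := mem_closedBall.mp (hKR (htK hit))
      have hzi : dist z i < r / 2 := mem_ball.mp hz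
      have : dist z x₀ ≤ dist z i + dist i x₀ := dist_triangle _ _ _
      rw [mem_ball, hsdef]
      have : dist z x₀ < r / 2 + R := by linarith
      linarith
    have hmono : m (ball i (r / 2)) ≤ m ({z | g z = z}ᶜ ∩ ball x₀ s) :=
      measure_mono (Set.subset_inter hsub1 hsub2)
    exact absurd (lt_of_le_of_lt (hmono.trans (hΛ g hg)) (hξ i hit)) (lt_irrefl _)
  -- conclude
  refine ⟨Λ.subgroupOf G, ?_, ?_⟩
  · intro g' hg'
    have hgΛ : (g' : X ≃ᵢ X) ∈ Λ := Subgroup.mem_subgroupOf.mp hg'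
    refine hWU (hsub ?_)
    exact fun x hx => key _ hgΛ x hx
  · intro hbot
    apply hΛbot
    ext g
    simp only [Subgroup.mem_bot]
    constructor
    · intro hgΛ
      have hmem : (⟨g, hΛG hgΛ⟩ : G) ∈ Λ.subgroupOf G := Subgroup.mem_subgroupOf.mpr hgΛ
      rw [hbot, Subgroup.mem_bot] at hmem
      exact congrArg Subtype.val hmem
    · rintro rfl; exact Λ.one_mem
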